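/- (Polygon inequality for three-qubit pure states) Let |ψ⟩ be a unit vector in ℂ²⊗ℂ²⊗ℂ² and let r_A, r_B, r_C denote the smaller eigenvalue of each single-qubit reduced density matrix ρ_A, ρ_B, ρ_C. Then 0 ≤ r_A, r_B, r_C ≤ 1/2 and r_A ≤ r_B + r_C, r_B ≤ r_C + r_A, r_C ≤ r_A + r_B. -/

import Mathlib

open Matrix Finset ComplexOrder

noncomputable section

abbrev Q3 : Type := Fin 2 × Fin 2 × Fin 2

/-- Ky Fan `r`-sum: the largest possible sum of `r` eigenvalues of a Hermitian matrix. -/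
noncomputable def kyFan {n : Type*} [Fintype n] [DecidableEq n]
    {A : Matrix n n ℂ} (hA : A.IsHermitian) (r : ℕ) : ℝ :=
  sSup {x : ℝ | ∃ s : Finset n, s.card = r ∧ x = ∑ i ∈ s, hA.eigenvalues i}

/-- Eigenvalue majorization of Hermitian matrices. -/
def Majorized {n : Type*} [Fintype n] [DecidableEq n]
    {A B : Matrix n n ℂ} (hA : A.IsHermitian) (hB : B.IsHermitian) : Prop :=
  (∀ r : ℕ, kyFan hA r ≤ kyFan hB r) ∧ A.trace = B.trace

/-- Eigenvalues of a Hermitian matrix sorted in nonincreasing order. -/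
noncomputable def sortedEigDesc {n : ℕ} {A : Matrix (Fin n) (Fin n) ℂ}
    (hA : A.IsHermitian) : Fin n → ℝ :=
  fun i => (hA.eigenvalues ∘ Tuple.sort hA.eigenvalues) i.rev

def IsDensity {n : Type*} [Fintype n] [DecidableEq n] (ρ : Matrix n n ℂ) : Prop :=
  ρ.PosSemidef ∧ ρ.trace = 1

def P0 : Matrix (Fin 2) (Fin 2) ℂ := fun i j => if i = 0 ∧ j = 0 then 1 else 0

def P00 : Matrix (Fin 2 × Fin 2) (Fin 2 × Fin 2) ℂ :=
  fun p q => P0 p.1 q.1 * P0 p.2 q.2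

/-- Projector onto a pure two-qubit state. -/
def proj2 (v : Fin 2 × Fin 2 → ℂ) : Matrix (Fin 2 × Fin 2) (Fin 2 × Fin 2) ℂ :=
  fun p q => v p * (starRingEnd ℂ) (v q)

/-- Projector onto a pure three-qubit state. -/
def projQ3 (v : Q3 → ℂ) : Matrix Q3 Q3 ℂ :=
  fun p q => v p * (starRingEnd ℂ) (v q)

/-- Embed a two-body operator on qubits A,B, acting as identity on C. -/
def embAB (M : Matrix (Fin 2 × Fin 2) (Fin 2 × Fin 2) ℂ) : Matrix Q3 Q3 ℂ :=
  fun p q => M (p.1, p.2.1) (q.1, q.2.1) * (if p.2.2 = q.2.2 then 1 else 0)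

/-- Embed a two-body operator on qubits A,C, acting as identity on B. -/
def embAC (M : Matrix (Fin 2 × Fin 2) (Fin 2 × Fin 2) ℂ) : Matrix Q3 Q3 ℂ :=
  fun p q => M (p.1, p.2.2) (q.1, q.2.2) * (if p.2.1 = q.2.1 then 1 else 0)

/-- Embed a two-body operator on qubits B,C, acting as identity on A. -/
def embBC (M : Matrix (Fin 2 × Fin 2) (Fin 2 × Fin 2) ℂ) : Matrix Q3 Q3 ℂ :=
  fun p q => M p.2 q.2 * (if p.1 = q.1 then 1 else 0)

def embA (M : Matrix (Fin 2) (Fin 2) ℂ) : Matrix Q3 Q3 ℂ :=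
  fun p q => M p.1 q.1 * (if p.2 = q.2 then 1 else 0)

def embB (M : Matrix (Fin 2) (Fin 2) ℂ) : Matrix Q3 Q3 ℂ :=
  fun p q => M p.2.1 q.2.1 * (if (p.1, p.2.2) = (q.1, q.2.2) then 1 else 0)

def embC (M : Matrix (Fin 2) (Fin 2) ℂ) : Matrix Q3 Q3 ℂ :=
  fun p q => M p.2.2 q.2.2 * (if (p.1, p.2.1) = (q.1, q.2.1) then 1 else 0)

def margA (ρ : Matrix Q3 Q3 ℂ) : Matrix (Fin 2) (Fin 2) ℂ :=
  fun i j => ∑ b : Fin 2, ∑ c : Fin 2, ρ (i, b, c) (j, b, c)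

def margB (ρ : Matrix Q3 Q3 ℂ) : Matrix (Fin 2) (Fin 2) ℂ :=
  fun i j => ∑ a : Fin 2, ∑ c : Fin 2, ρ (a, i, c) (a, j, c)

def margC (ρ : Matrix Q3 Q3 ℂ) : Matrix (Fin 2) (Fin 2) ℂ :=
  fun i j => ∑ a : Fin 2, ∑ b : Fin 2, ρ (a, b, i) (a, b, j)

def margAB (ρ : Matrix Q3 Q3 ℂ) : Matrix (Fin 2 × Fin 2) (Fin 2 × Fin 2) ℂ :=
  fun p q => ∑ c : Fin 2, ρ (p.1, p.2, c) (q.1, q.2, c)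

def margAC (ρ : Matrix Q3 Q3 ℂ) : Matrix (Fin 2 × Fin 2) (Fin 2 × Fin 2) ℂ :=
  fun p q => ∑ b : Fin 2, ρ (p.1, b, p.2) (q.1, b, q.2)

def margBC (ρ : Matrix Q3 Q3 ℂ) : Matrix (Fin 2 × Fin 2) (Fin 2 × Fin 2) ℂ :=
  fun p q => ∑ a : Fin 2, ρ (a, p.1, p.2) (a, q.1, q.2)

def sigmaY : Matrix (Fin 2) (Fin 2) ℂ := !![0, -Complex.I; Complex.I, 0]

/-- The alignment target `H_target = (1/6)(P₀⊗P₀⊗I + P₀⊗I⊗P₀ + I⊗P₀⊗P₀)`. -/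
def Htarget : Matrix Q3 Q3 ℂ := (1/6 : ℂ) • (embAB P00 + embAC P00 + embBC P00)

/-- The alignment operator built from three two-body pure states. -/
def Hof (u v w : Fin 2 × Fin 2 → ℂ) : Matrix Q3 Q3 ℂ :=
  (1/6 : ℂ) • (embAB (proj2 u) + embAC (proj2 v) + embBC (proj2 w))

end



open Complex ComplexConjugate
open scoped InnerProductSpace

open scoped InnerProductSpace

lemma key2 (b0 b1 x0 x1 : ℂ) (hb : normSq b0 + normSq b1 = 1) :
    normSq (conj b0 * x0 + conj b1 * x1) + normSq (-b1 * x0 + b0 * x1)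
      = normSq x0 + normSq x1 := by
  simp only [Complex.normSq_apply, Complex.add_re, Complex.add_im, Complex.mul_re,
    Complex.mul_im, Complex.conj_re, Complex.conj_im, Complex.neg_re, Complex.neg_im] at *
  linear_combination (x0.re^2 + x0.im^2 + x1.re^2 + x1.im^2) * hb

lemma cs4 (u v : Fin 2 × Fin 2 → ℂ) :
    ((star u ⬝ᵥ v).re)^2 ≤ (∑ i, normSq (u i)) * (∑ i, normSq (v i)) := by
  have h := norm_inner_le_norm (𝕜 := ℂ) ((WithLp.equiv 2 _).symm u) ((WithLp.equiv 2 _).symm v)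
  rw [EuclideanSpace.inner_toLp_toLp, dotProduct_comm] at h
  change ‖star u ⬝ᵥ v‖ ≤ _ at h
  have hu : ‖(WithLp.equiv 2 ((Fin 2 × Fin 2) → ℂ)).symm u‖^2 = ∑ i, normSq (u i) := by
    rw [EuclideanSpace.norm_eq, Real.sq_sqrt (by positivity)]
    simp [Complex.normSq_eq_norm_sq]
  have hv : ‖(WithLp.equiv 2 ((Fin 2 × Fin 2) → ℂ)).symm v‖^2 = ∑ i, normSq (v i) := by
    rw [EuclideanSpace.norm_eq, Real.sq_sqrt (by positivity)]
    simp [Complex.normSq_eq_norm_sq]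
  rw [← hu, ← hv]
  have h1 : |(star u ⬝ᵥ v).re| ≤ ‖star u ⬝ᵥ v‖ := Complex.abs_re_le_norm _
  nlinarith [norm_nonneg (star u ⬝ᵥ v), norm_nonneg ((WithLp.equiv 2 ((Fin 2 × Fin 2) → ℂ)).symm u),
    norm_nonneg ((WithLp.equiv 2 ((Fin 2 × Fin 2) → ℂ)).symm v), abs_nonneg (star u ⬝ᵥ v).re,
    neg_abs_le (star u ⬝ᵥ v).re, le_abs_self (star u ⬝ᵥ v).re]


lemma rayleigh2 {M : Matrix (Fin 2) (Fin 2) ℂ} (hM : M.IsHermitian) (m : ℝ)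
    (hm0 : hM.eigenvalues 0 ≤ m) (hm1 : hM.eigenvalues 1 ≤ m) (d : Fin 2 → ℂ) :
    (star d ⬝ᵥ M *ᵥ d).re ≤ m * (normSq (d 0) + normSq (d 1)) := by
  set B := hM.eigenvectorBasis with hB
  set d' : EuclideanSpace ℂ (Fin 2) := WithLp.toLp 2 d with hd'
  have hortho : ∀ i j, star (fun k => (B i : EuclideanSpace ℂ (Fin 2)) k) ⬝ᵥ
      (fun k => (B j : EuclideanSpace ℂ (Fin 2)) k) = if i = j then 1 else 0 :=
    fun i j => by rw [dotProduct_comm]; exact orthonormal_iff_ite.mp B.orthonormal i j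
  have hrepr : (⟪B 0, d'⟫_ℂ) • B 0 + (⟪B 1, d'⟫_ℂ) • B 1 = d' := by
    have := B.sum_repr' d'
    rwa [Fin.sum_univ_two] at this
  set e0 := ⟪B 0, d'⟫_ℂ with he0
  set e1 := ⟪B 1, d'⟫_ℂ with he1
  set v0 : Fin 2 → ℂ := fun k => (B 0 : EuclideanSpace ℂ (Fin 2)) k with hv0
  set v1 : Fin 2 → ℂ := fun k => (B 1 : EuclideanSpace ℂ (Fin 2)) k with hv1
  have hd2 : d = e0 • v0 + e1 • v1 := by
    funext i
    have := congrFun (congrArg (fun (x : EuclideanSpace ℂ (Fin 2)) => (x : Fin 2 → ℂ)) hrepr) i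
    exact this.symm
  have hMv0 : M *ᵥ v0 = ((hM.eigenvalues 0 : ℂ)) • v0 := by
    have := hM.mulVec_eigenvectorBasis 0
    funext k
    have := congrFun this k
    simpa [Complex.real_smul] using this
  have hMv1 : M *ᵥ v1 = ((hM.eigenvalues 1 : ℂ)) • v1 := by
    have := hM.mulVec_eigenvectorBasis 1
    funext k
    have := congrFun this k
    simpa [Complex.real_smul] using this
  have hquad : star d ⬝ᵥ M *ᵥ d =
      (normSq e0 * hM.eigenvalues 0 + normSq e1 * hM.eigenvalues 1 : ℝ) := by
    rw [hd2]
    simp only [mulVec_add, mulVec_smul, hMv0, hMv1, star_add, star_smul,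
      add_dotProduct, dotProduct_add, smul_dotProduct, dotProduct_smul,
      (show star v0 ⬝ᵥ v0 = _ from hortho 0 0), (show star v0 ⬝ᵥ v1 = _ from hortho 0 1),
        (show star v1 ⬝ᵥ v0 = _ from hortho 1 0), (show star v1 ⬝ᵥ v1 = _ from hortho 1 1)]
    simp [smul_eq_mul, RCLike.star_def]
    push_cast [← Complex.mul_conj]
    ring
  have hnorm : normSq (d 0) + normSq (d 1) = normSq e0 + normSq e1 := by
    have h2 : star d ⬝ᵥ d = (normSq e0 + normSq e1 : ℝ) := by
      rw [hd2]
      simp only [star_add, star_smul, add_dotProduct, dotProduct_add,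
        smul_dotProduct, dotProduct_smul, (show star v0 ⬝ᵥ v0 = _ from hortho 0 0), (show star v0 ⬝ᵥ v1 = _ from hortho 0 1),
        (show star v1 ⬝ᵥ v0 = _ from hortho 1 0), (show star v1 ⬝ᵥ v1 = _ from hortho 1 1)]
      simp [smul_eq_mul, RCLike.star_def]
      push_cast [← Complex.mul_conj]
      ring
    have h1 : star d ⬝ᵥ d = (normSq (d 0) + normSq (d 1) : ℝ) := by
      simp [dotProduct, Fin.sum_univ_two, ← Complex.mul_conj]
      push_cast [← Complex.mul_conj]
      ring
    have := h1.symm.trans h2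
    exact_mod_cast this
  rw [hquad, hnorm]
  simp only [Complex.ofReal_re]
  nlinarith [normSq_nonneg e0, normSq_nonneg e1]

lemma trace_eq_sum_eig2 {M : Matrix (Fin 2) (Fin 2) ℂ} (hM : M.IsHermitian)
    (htr : M.trace = 1) : hM.eigenvalues 0 + hM.eigenvalues 1 = 1 := by
  have hs := hM.spectral_theorem
  have h1 : M.trace = ((hM.eigenvalues 0 : ℂ) + (hM.eigenvalues 1 : ℂ)) := by
    conv_lhs => rw [hs]
    rw [← hs, hM.trace_eq_sum_eigenvalues, Fin.sum_univ_two]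
    rfl
  rw [htr] at h1
  exact_mod_cast h1.symm

lemma exists_top2 {M : Matrix (Fin 2) (Fin 2) ℂ} (hM : M.IsHermitian) (i : Fin 2) :
    ∃ b : Fin 2 → ℂ, (normSq (b 0) + normSq (b 1) = 1) ∧
      (star b ⬝ᵥ M *ᵥ b).re = hM.eigenvalues i := by
  set B := hM.eigenvectorBasis with hB
  refine ⟨fun k => (B i : EuclideanSpace ℂ (Fin 2)) k, ?_, ?_⟩
  · have h1 : star (fun k => (B i : EuclideanSpace ℂ (Fin 2)) k) ⬝ᵥ
        (fun k => (B i : EuclideanSpace ℂ (Fin 2)) k) = 1 := by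
      rw [dotProduct_comm]; have := orthonormal_iff_ite.mp B.orthonormal i i
      rw [if_pos rfl] at this; exact this
    have := congrArg Complex.re h1
    simp only [dotProduct, Fin.sum_univ_two, Pi.star_apply, RCLike.star_def] at this
    simpa [← Complex.normSq_eq_conj_mul_self, Complex.add_re] using this
  · have hMv : M *ᵥ (fun k => (B i : EuclideanSpace ℂ (Fin 2)) k)
        = ((hM.eigenvalues i : ℂ)) • (fun k => (B i : EuclideanSpace ℂ (Fin 2)) k) := by
      funext k
      have := congrFun (hM.mulVec_eigenvectorBasis i) k
      simpa [Complex.real_smul] using this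
    rw [hMv]
    have h1 : star (fun k => (B i : EuclideanSpace ℂ (Fin 2)) k) ⬝ᵥ
        (fun k => (B i : EuclideanSpace ℂ (Fin 2)) k) = 1 := by
      rw [dotProduct_comm]; have := orthonormal_iff_ite.mp B.orthonormal i i
      rw [if_pos rfl] at this; exact this
    rw [dotProduct_smul, h1]
    simp

lemma exists_max2 {M : Matrix (Fin 2) (Fin 2) ℂ} (hM : M.IsHermitian) :
    ∃ b : Fin 2 → ℂ, (normSq (b 0) + normSq (b 1) = 1) ∧
      (star b ⬝ᵥ M *ᵥ b).re = max (hM.eigenvalues 0) (hM.eigenvalues 1) := by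
  rcases le_total (hM.eigenvalues 0) (hM.eigenvalues 1) with hle | hle
  · obtain ⟨b, hb1, hb2⟩ := exists_top2 hM 1
    exact ⟨b, hb1, by rw [hb2, max_eq_right hle]⟩
  · obtain ⟨b, hb1, hb2⟩ := exists_top2 hM 0
    exact ⟨b, hb1, by rw [hb2, max_eq_left hle]⟩


-- quadratic form values as nonneg reals
lemma quadA (ψ : Q3 → ℂ) (x : Fin 2 → ℂ) : ∃ r : ℝ, 0 ≤ r ∧
    star x ⬝ᵥ margA (projQ3 ψ) *ᵥ x = (r : ℂ) := by
  refine ⟨normSq (conj (x 0) * ψ (0,0,0) + conj (x 1) * ψ (1,0,0))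
    + normSq (conj (x 0) * ψ (0,0,1) + conj (x 1) * ψ (1,0,1))
    + normSq (conj (x 0) * ψ (0,1,0) + conj (x 1) * ψ (1,1,0))
    + normSq (conj (x 0) * ψ (0,1,1) + conj (x 1) * ψ (1,1,1)), add_nonneg (add_nonneg (add_nonneg (normSq_nonneg _) (normSq_nonneg _)) (normSq_nonneg _)) (normSq_nonneg _), ?_⟩
  push_cast [← Complex.mul_conj]
  simp only [margA, projQ3, dotProduct, mulVec, Fin.sum_univ_two, Pi.star_apply,
    RCLike.star_def, _root_.map_add, _root_.map_mul, Complex.conj_conj]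
  ring

lemma quadB (ψ : Q3 → ℂ) (x : Fin 2 → ℂ) : ∃ r : ℝ, 0 ≤ r ∧
    star x ⬝ᵥ margB (projQ3 ψ) *ᵥ x = (r : ℂ) := by
  refine ⟨normSq (conj (x 0) * ψ (0,0,0) + conj (x 1) * ψ (0,1,0))
    + normSq (conj (x 0) * ψ (0,0,1) + conj (x 1) * ψ (0,1,1))
    + normSq (conj (x 0) * ψ (1,0,0) + conj (x 1) * ψ (1,1,0))
    + normSq (conj (x 0) * ψ (1,0,1) + conj (x 1) * ψ (1,1,1)), add_nonneg (add_nonneg (add_nonneg (normSq_nonneg _) (normSq_nonneg _)) (normSq_nonneg _)) (normSq_nonneg _), ?_⟩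
  push_cast [← Complex.mul_conj]
  simp only [margB, projQ3, dotProduct, mulVec, Fin.sum_univ_two, Pi.star_apply,
    RCLike.star_def, _root_.map_add, _root_.map_mul, Complex.conj_conj]
  ring

lemma quadC (ψ : Q3 → ℂ) (x : Fin 2 → ℂ) : ∃ r : ℝ, 0 ≤ r ∧
    star x ⬝ᵥ margC (projQ3 ψ) *ᵥ x = (r : ℂ) := by
  refine ⟨normSq (conj (x 0) * ψ (0,0,0) + conj (x 1) * ψ (0,0,1))
    + normSq (conj (x 0) * ψ (0,1,0) + conj (x 1) * ψ (0,1,1))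
    + normSq (conj (x 0) * ψ (1,0,0) + conj (x 1) * ψ (1,0,1))
    + normSq (conj (x 0) * ψ (1,1,0) + conj (x 1) * ψ (1,1,1)), add_nonneg (add_nonneg (add_nonneg (normSq_nonneg _) (normSq_nonneg _)) (normSq_nonneg _)) (normSq_nonneg _), ?_⟩
  push_cast [← Complex.mul_conj]
  simp only [margC, projQ3, dotProduct, mulVec, Fin.sum_univ_two, Pi.star_apply,
    RCLike.star_def, _root_.map_add, _root_.map_mul, Complex.conj_conj]
  ring

lemma traceA (ψ : Q3 → ℂ) (hψ : ∑ p : Q3, normSq (ψ p) = 1) :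
    (margA (projQ3 ψ)).trace = 1 := by
  have h : (margA (projQ3 ψ)).trace = ((∑ p : Q3, normSq (ψ p) : ℝ) : ℂ) := by
    push_cast [← Complex.mul_conj]
    simp only [Matrix.trace, Matrix.diag, margA, projQ3, Fintype.sum_prod_type,
      Fin.sum_univ_two]
    try ring
  rw [h, hψ, Complex.ofReal_one]

lemma traceB (ψ : Q3 → ℂ) (hψ : ∑ p : Q3, normSq (ψ p) = 1) :
    (margB (projQ3 ψ)).trace = 1 := by
  have h : (margB (projQ3 ψ)).trace = ((∑ p : Q3, normSq (ψ p) : ℝ) : ℂ) := by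
    push_cast [← Complex.mul_conj]
    simp only [Matrix.trace, Matrix.diag, margB, projQ3, Fintype.sum_prod_type,
      Fin.sum_univ_two]
    try ring
  rw [h, hψ, Complex.ofReal_one]

lemma traceC (ψ : Q3 → ℂ) (hψ : ∑ p : Q3, normSq (ψ p) = 1) :
    (margC (projQ3 ψ)).trace = 1 := by
  have h : (margC (projQ3 ψ)).trace = ((∑ p : Q3, normSq (ψ p) : ℝ) : ℂ) := by
    push_cast [← Complex.mul_conj]
    simp only [Matrix.trace, Matrix.diag, margC, projQ3, Fintype.sum_prod_type,
      Fin.sum_univ_two]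
    try ring
  rw [h, hψ, Complex.ofReal_one]
lemma core (ψ : Q3 → ℂ) (hψ : ∑ p : Q3, normSq (ψ p) = 1)
    (b c : Fin 2 → ℂ)
    (hb : normSq (b 0) + normSq (b 1) = 1) (hc : normSq (c 0) + normSq (c 1) = 1)
    (mA : ℝ) (hmA0 : 0 ≤ mA)
    (hRay : ∀ d : Fin 2 → ℂ, (star d ⬝ᵥ margA (projQ3 ψ) *ᵥ d).re
      ≤ mA * (normSq (d 0) + normSq (d 1))) :
    (star b ⬝ᵥ margB (projQ3 ψ) *ᵥ b).re + (star c ⬝ᵥ margC (projQ3 ψ) *ᵥ c).re ≤ 1 + mA := by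
  set g : Fin 2 → Fin 2 → ℂ :=
    fun a k => conj (b 0) * ψ (a,0,k) + conj (b 1) * ψ (a,1,k) with hg
  set h : Fin 2 → Fin 2 → ℂ :=
    fun a j => conj (c 0) * ψ (a,j,0) + conj (c 1) * ψ (a,j,1) with hh
  set hp : Fin 2 → Fin 2 → ℂ :=
    fun a j => -(c 1) * ψ (a,j,0) + c 0 * ψ (a,j,1) with hhp
  set F : Fin 2 → ℂ := fun a => conj (c 0) * g a 0 + conj (c 1) * g a 1 with hF
  set F1 : Fin 2 → ℂ := fun a => -(c 1) * g a 0 + c 0 * g a 1 with hF1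
  set F2 : Fin 2 → ℂ := fun a => -(b 1) * hp a 0 + b 0 * hp a 1 with hF2
  set G : Fin 2 × Fin 2 → ℂ :=
    fun jk => conj (F 0) * ψ (0, jk.1, jk.2) + conj (F 1) * ψ (1, jk.1, jk.2) with hG
  -- value of the B quadratic form
  have eQB : star b ⬝ᵥ margB (projQ3 ψ) *ᵥ b =
      ((normSq (g 0 0) + normSq (g 0 1) + normSq (g 1 0) + normSq (g 1 1) : ℝ) : ℂ) := by
    push_cast [← Complex.mul_conj]
    simp only [hg, margB, projQ3, dotProduct, mulVec, Fin.sum_univ_two, Pi.star_apply,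
      RCLike.star_def, _root_.map_add, _root_.map_mul, Complex.conj_conj]
    ring
  have eQC : star c ⬝ᵥ margC (projQ3 ψ) *ᵥ c =
      ((normSq (h 0 0) + normSq (h 0 1) + normSq (h 1 0) + normSq (h 1 1) : ℝ) : ℂ) := by
    push_cast [← Complex.mul_conj]
    simp only [hh, margC, projQ3, dotProduct, mulVec, Fin.sum_univ_two, Pi.star_apply,
      RCLike.star_def, _root_.map_add, _root_.map_mul, Complex.conj_conj]
    ring
  have eQA : star F ⬝ᵥ margA (projQ3 ψ) *ᵥ F =
      ((normSq (G (0,0)) + normSq (G (0,1)) + normSq (G (1,0)) + normSq (G (1,1)) : ℝ) : ℂ) := by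
    push_cast [← Complex.mul_conj]
    simp only [hG, hF, hg, margA, projQ3, dotProduct, mulVec, Fin.sum_univ_two, Pi.star_apply,
      RCLike.star_def, _root_.map_add, _root_.map_mul, _root_.map_neg, Complex.conj_conj]
    ring
  have rQB : (star b ⬝ᵥ margB (projQ3 ψ) *ᵥ b).re
      = normSq (g 0 0) + normSq (g 0 1) + normSq (g 1 0) + normSq (g 1 1) := by
    rw [eQB]; exact Complex.ofReal_re _
  have rQC : (star c ⬝ᵥ margC (projQ3 ψ) *ᵥ c).re
      = normSq (h 0 0) + normSq (h 0 1) + normSq (h 1 0) + normSq (h 1 1) := by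
    rw [eQC]; exact Complex.ofReal_re _
  have rQA : (star F ⬝ᵥ margA (projQ3 ψ) *ᵥ F).re
      = normSq (G (0,0)) + normSq (G (0,1)) + normSq (G (1,0)) + normSq (G (1,1)) := by
    rw [eQA]; exact Complex.ofReal_re _
  have k1 : ∀ a, normSq (F a) + normSq (F1 a) = normSq (g a 0) + normSq (g a 1) := by
    intro a; simp only [hF, hF1]; exact key2 (c 0) (c 1) (g a 0) (g a 1) hc
  have k2 : ∀ a j, normSq (h a j) + normSq (hp a j)
      = normSq (ψ (a,j,0)) + normSq (ψ (a,j,1)) := by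
    intro a j; simp only [hh, hhp]; exact key2 (c 0) (c 1) _ _ hc
  have eF1 : ∀ a, F1 a = conj (b 0) * hp a 0 + conj (b 1) * hp a 1 := by
    intro a; simp only [hF1, hg, hhp]; ring
  have k3 : ∀ a, normSq (F1 a) + normSq (F2 a) = normSq (hp a 0) + normSq (hp a 1) := by
    intro a; rw [eF1 a]; simp only [hF2]; exact key2 (b 0) (b 1) _ _ hb
  have hψ8 : normSq (ψ (0,0,0)) + normSq (ψ (0,0,1)) + normSq (ψ (0,1,0)) + normSq (ψ (0,1,1))
      + normSq (ψ (1,0,0)) + normSq (ψ (1,0,1)) + normSq (ψ (1,1,0)) + normSq (ψ (1,1,1)) = 1 := by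
    rw [← hψ]
    rw [Fintype.sum_prod_type]
    simp only [Fintype.sum_prod_type, Fin.sum_univ_two]
    ring
  -- Cauchy-Schwarz step : S ≤ mA
  have eT : star (fun jk : Fin 2 × Fin 2 => b jk.1 * c jk.2) ⬝ᵥ G
      = ((normSq (F 0) + normSq (F 1) : ℝ) : ℂ) := by
    push_cast [← Complex.mul_conj]
    simp only [hG, hF, hg, dotProduct, Fintype.sum_prod_type, Fin.sum_univ_two, Pi.star_apply,
      RCLike.star_def, _root_.map_add, _root_.map_mul, Complex.conj_conj]
    ring
  have hcs := cs4 (fun jk : Fin 2 × Fin 2 => b jk.1 * c jk.2) G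
  rw [eT] at hcs
  have hu1 : (∑ i : Fin 2 × Fin 2, normSq ((fun jk : Fin 2 × Fin 2 => b jk.1 * c jk.2) i)) = 1 := by
    simp only [Fintype.sum_prod_type, Fin.sum_univ_two, Complex.normSq_mul]
    linear_combination (normSq (c 0) + normSq (c 1)) * hb + hc
  rw [hu1, one_mul] at hcs
  have hSG : (∑ i : Fin 2 × Fin 2, normSq (G i))
      = normSq (G (0,0)) + normSq (G (0,1)) + normSq (G (1,0)) + normSq (G (1,1)) := by
    rw [Fintype.sum_prod_type]
    simp only [Fin.sum_univ_two]
    ring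
  rw [hSG] at hcs
  simp only [Complex.ofReal_re] at hcs
  have hQA_le : normSq (G (0,0)) + normSq (G (0,1)) + normSq (G (1,0)) + normSq (G (1,1))
      ≤ mA * (normSq (F 0) + normSq (F 1)) := by
    rw [← rQA]; exact hRay F
  have hS0 : 0 ≤ normSq (F 0) + normSq (F 1) := add_nonneg (normSq_nonneg _) (normSq_nonneg _)
  have hSmA : normSq (F 0) + normSq (F 1) ≤ mA := by
    rcases lt_or_eq_of_le hS0 with hpos | hzero
    · have h2 : (normSq (F 0) + normSq (F 1))^2 ≤ mA * (normSq (F 0) + normSq (F 1)) :=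
        le_trans hcs hQA_le
      nlinarith
    · rw [← hzero]; exact hmA0
  rw [rQB, rQC]
  linarith [k1 0, k1 1, k2 0 0, k2 0 1, k2 1 0, k2 1 1, k3 0, k3 1,
    normSq_nonneg (F2 0), normSq_nonneg (F2 1)]

theorem stmt16 (ψ : Q3 → ℂ) (hψ : ∑ p, ‖ψ p‖ ^ 2 = 1)
    (hA : (margA (projQ3 ψ)).IsHermitian) (hB : (margB (projQ3 ψ)).IsHermitian)
    (hC : (margC (projQ3 ψ)).IsHermitian) :
    let rA := min (hA.eigenvalues 0) (hA.eigenvalues 1)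
    let rB := min (hB.eigenvalues 0) (hB.eigenvalues 1)
    let rC := min (hC.eigenvalues 0) (hC.eigenvalues 1)
    (0 ≤ rA ∧ 0 ≤ rB ∧ 0 ≤ rC) ∧ (rA ≤ 1/2 ∧ rB ≤ 1/2 ∧ rC ≤ 1/2) ∧
      rA ≤ rB + rC ∧ rB ≤ rC + rA ∧ rC ≤ rA + rB := by
  intro rA rB rC
  have hψ' : ∑ p : Q3, normSq (ψ p) = 1 := by
    rw [← hψ]
    congr 1
    funext p
    rw [Complex.normSq_eq_norm_sq]
  -- positive semidefiniteness of the marginals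
  have psdA : (margA (projQ3 ψ)).PosSemidef := by
    refine posSemidef_iff_dotProduct_mulVec.mpr ⟨hA, fun x => ?_⟩
    obtain ⟨r, hr0, hr⟩ := quadA ψ x
    rw [hr]
    exact_mod_cast hr0
  have psdB : (margB (projQ3 ψ)).PosSemidef := by
    refine posSemidef_iff_dotProduct_mulVec.mpr ⟨hB, fun x => ?_⟩
    obtain ⟨r, hr0, hr⟩ := quadB ψ x
    rw [hr]
    exact_mod_cast hr0
  have psdC : (margC (projQ3 ψ)).PosSemidef := by
    refine posSemidef_iff_dotProduct_mulVec.mpr ⟨hC, fun x => ?_⟩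
    obtain ⟨r, hr0, hr⟩ := quadC ψ x
    rw [hr]
    exact_mod_cast hr0
  have hA0 : 0 ≤ hA.eigenvalues 0 := psdA.eigenvalues_nonneg 0
  have hA1 : 0 ≤ hA.eigenvalues 1 := psdA.eigenvalues_nonneg 1
  have hB0 : 0 ≤ hB.eigenvalues 0 := psdB.eigenvalues_nonneg 0
  have hB1 : 0 ≤ hB.eigenvalues 1 := psdB.eigenvalues_nonneg 1
  have hC0 : 0 ≤ hC.eigenvalues 0 := psdC.eigenvalues_nonneg 0
  have hC1 : 0 ≤ hC.eigenvalues 1 := psdC.eigenvalues_nonneg 1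
  have sumA : hA.eigenvalues 0 + hA.eigenvalues 1 = 1 := trace_eq_sum_eig2 hA (traceA ψ hψ')
  have sumB : hB.eigenvalues 0 + hB.eigenvalues 1 = 1 := trace_eq_sum_eig2 hB (traceB ψ hψ')
  have sumC : hC.eigenvalues 0 + hC.eigenvalues 1 = 1 := trace_eq_sum_eig2 hC (traceC ψ hψ')
  set mA := max (hA.eigenvalues 0) (hA.eigenvalues 1) with hmA
  set mB := max (hB.eigenvalues 0) (hB.eigenvalues 1) with hmB
  set mC := max (hC.eigenvalues 0) (hC.eigenvalues 1) with hmC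
  have hmA0 : 0 ≤ mA := le_trans hA0 (le_max_left _ _)
  have hmB0 : 0 ≤ mB := le_trans hB0 (le_max_left _ _)
  have hmC0 : 0 ≤ mC := le_trans hC0 (le_max_left _ _)
  have minmaxA : rA + mA = 1 := by rw [min_add_max]; exact sumA
  have minmaxB : rB + mB = 1 := by rw [min_add_max]; exact sumB
  have minmaxC : rC + mC = 1 := by rw [min_add_max]; exact sumC
  have hrA : rA ≤ mA := min_le_max
  have hrB : rB ≤ mB := min_le_max
  have hrC : rC ≤ mC := min_le_max
  -- first polygon inequality: mB + mC ≤ 1 + mA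
  have ineq1 : mB + mC ≤ 1 + mA := by
    obtain ⟨b, hbn, hbv⟩ := exists_max2 hB
    obtain ⟨c, hcn, hcv⟩ := exists_max2 hC
    have h := core ψ hψ' b c hbn hcn mA hmA0
      (fun d => rayleigh2 hA mA (le_max_left _ _) (le_max_right _ _) d)
    rw [hbv, hcv] at h
    exact h
  -- swapped states
  have ineq2 : mA + mC ≤ 1 + mB := by
    set ψ₂ : Q3 → ℂ := fun p => ψ (p.2.1, p.1, p.2.2) with hψ₂def
    have m2A : margA (projQ3 ψ₂) = margB (projQ3 ψ) := rfl
    have m2B : margB (projQ3 ψ₂) = margA (projQ3 ψ) := rfl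
    have m2C : margC (projQ3 ψ₂) = margC (projQ3 ψ) := by
      funext i j
      simp only [margC, projQ3, hψ₂def]
      exact Finset.sum_comm
    have hψ₂ : ∑ p : Q3, normSq (ψ₂ p) = 1 := by
      rw [← hψ']
      simp only [Fintype.sum_prod_type, Fin.sum_univ_two, hψ₂def]
      ring
    obtain ⟨b, hbn, hbv⟩ := exists_max2 hA
    obtain ⟨c, hcn, hcv⟩ := exists_max2 hC
    have h := core ψ₂ hψ₂ b c hbn hcn mB hmB0
      (fun d => by
        rw [m2A]
        exact rayleigh2 hB mB (le_max_left _ _) (le_max_right _ _) d)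
    rw [m2B, m2C, hbv, hcv] at h
    exact h
  have ineq3 : mB + mA ≤ 1 + mC := by
    set ψ₃ : Q3 → ℂ := fun p => ψ (p.2.2, p.2.1, p.1) with hψ₃def
    have m3B : margB (projQ3 ψ₃) = margB (projQ3 ψ) := by
      funext i j
      simp only [margB, projQ3, hψ₃def]
      exact Finset.sum_comm
    have m3C : margC (projQ3 ψ₃) = margA (projQ3 ψ) := by
      funext i j
      simp only [margC, margA, projQ3, hψ₃def]
      exact Finset.sum_comm
    have m3A : margA (projQ3 ψ₃) = margC (projQ3 ψ) := by
      funext i j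
      simp only [margA, margC, projQ3, hψ₃def]
      exact Finset.sum_comm
    have hψ₃ : ∑ p : Q3, normSq (ψ₃ p) = 1 := by
      rw [← hψ']
      simp only [Fintype.sum_prod_type, Fin.sum_univ_two, hψ₃def]
      ring
    obtain ⟨b, hbn, hbv⟩ := exists_max2 hB
    obtain ⟨c, hcn, hcv⟩ := exists_max2 hA
    have h := core ψ₃ hψ₃ b c hbn hcn mC hmC0
      (fun d => by
        rw [m3A]
        exact rayleigh2 hC mC (le_max_left _ _) (le_max_right _ _) d)
    rw [m3B, m3C, hbv, hcv] at h
    exact h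
  refine ⟨⟨le_min hA0 hA1, le_min hB0 hB1, le_min hC0 hC1⟩, ⟨?_, ?_, ?_⟩, ?_, ?_, ?_⟩
  · linarith
  · linarith
  · linarith
  · linarith
  · linarith
  · linarith
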